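/- For a normal binary delta-matroid D whose intersection graph G_D is the complete graph K_v on v vertices: if v is odd then ∂w_D(z) = 2^v z^{v−1}, and if v is even then ∂w_D(z) = 2^{v−1} z^v + 2^{v−1} z^{v−2}. -/

import Mathlib

open Finset

variable {α : Type*}

/-- The twist of a family of feasible sets by a set `A`:
`{A Δ X : X ∈ F}`. -/
def twistF [DecidableEq α] (A : Finset α) (F : Finset (Finset α)) : Finset (Finset α) :=
  F.image (fun X => symmDiff A X)

/-- `D = (E, F)` is a delta-matroid: `F` is nonempty, consists of subsets of `E`,
and satisfies the symmetric exchange axiom. -/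
def IsDeltaMatroid [DecidableEq α] (E : Finset α) (F : Finset (Finset α)) : Prop :=
  F.Nonempty ∧ (∀ X ∈ F, X ⊆ E) ∧
    ∀ X ∈ F, ∀ Y ∈ F, ∀ u ∈ symmDiff X Y,
      ∃ v ∈ symmDiff X Y, symmDiff X {u, v} ∈ F

/-- The width of a set system: max feasible size minus min feasible size. -/
def widthF (F : Finset (Finset α)) : ℕ :=
  (F.image Finset.card).max.getD 0 - (F.image Finset.card).min.getD 0

/-- The twist polynomial `∑_{A ⊆ E} z^{w(D*A)}`, as a polynomial over ℤ. -/
noncomputable def twistPoly [DecidableEq α] (E : Finset α) (F : Finset (Finset α)) :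
    Polynomial ℤ :=
  ∑ A ∈ E.powerset, Polynomial.X ^ widthF (twistF A F)

open scoped Classical in
/-- The feasible sets of the normal binary delta-matroid D(C): subsets A whose
principal submatrix C[A] is non-singular (C[∅] is non-singular by convention). -/
noncomputable def feas {α : Type*} [Fintype α] [DecidableEq α]
    (C : Matrix α α (ZMod 2)) : Finset (Finset α) :=
  Finset.univ.powerset.filter
    (fun A => (C.submatrix (fun i : {x // x ∈ A} => (i : α))
        (fun i : {x // x ∈ A} => (i : α))).det ≠ 0)

/-- The intersection graph of D(C) (loops discarded): u ~ v iff u ≠ v and C u v = 1. -/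
def iGraph {α : Type*} (C : Matrix α α (ZMod 2)) : SimpleGraph α :=
  SimpleGraph.fromRel (fun u v => C u v = 1)

/-- Determinant of the off-diagonal all-ones matrix over GF(2). -/
lemma det_complete_aux {β : Type*} [Fintype β] [DecidableEq β]
    (M : Matrix β β (ZMod 2)) (hM : ∀ i j, M i j = if i = j then 0 else 1) :
    M.det = 1 + (Fintype.card β : ZMod 2) := by
  have hrep : M = 1 + Matrix.replicateCol Unit (1 : β → ZMod 2) * Matrix.replicateRow Unit (1 : β → ZMod 2) := by
    ext i j
    by_cases h : i = j <;>
      simp [hM, h, Matrix.one_apply, Matrix.mul_apply]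
    · decide
  rw [hrep, Matrix.det_one_add_replicateCol_mul_replicateRow]
  simp [dotProduct, Finset.card_univ]

/-- Parity of the cardinality of a symmetric difference. -/
lemma card_symmDiff_parity [DecidableEq α] (X Y : Finset α) :
    (symmDiff X Y).card % 2 = (X.card + Y.card) % 2 := by
  have h1 : symmDiff X Y = (X ∪ Y) \ (X ∩ Y) := by
    rw [symmDiff_eq_sup_sdiff_inf]; rfl
  have h2 : (X ∩ Y) ⊆ (X ∪ Y) := Finset.inter_subset_left.trans Finset.subset_union_left
  have h3 : (symmDiff X Y).card = (X ∪ Y).card - (X ∩ Y).card := by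
    rw [h1]; exact Finset.card_sdiff_of_subset h2
  have h4 := Finset.card_union_add_card_inter X Y
  have h5 : (X ∩ Y).card ≤ (X ∪ Y).card := Finset.card_le_card h2
  omega

/-- For C = J - I over GF(2), the feasible sets are exactly the even-cardinality sets. -/
lemma feas_eq {α : Type*} [Fintype α] [DecidableEq α] (C : Matrix α α (ZMod 2))
    (hC : ∀ u v, C u v = if u = v then 0 else 1) :
    feas C = Finset.univ.powerset.filter (fun A => Even A.card) := by
  classical
  ext A
  simp only [feas, Finset.mem_filter, Finset.mem_powerset]
  refine and_congr_right fun _ => ?_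
  have hdet : (C.submatrix (fun i : {x // x ∈ A} => (i : α))
      (fun i : {x // x ∈ A} => (i : α))).det = 1 + (A.card : ZMod 2) := by
    rw [det_complete_aux _ (fun i j => by
      simp only [Matrix.submatrix_apply, hC]
      by_cases h : i = j
      · simp [h]
      · rw [if_neg (fun hc => h (Subtype.ext hc)), if_neg h])]
    rw [Fintype.card_coe]
  rw [hdet]
  have hcast : (A.card : ZMod 2) = ((A.card % 2 : ℕ) : ZMod 2) := (ZMod.natCast_mod _ _).symm
  rcases Nat.mod_two_eq_zero_or_one A.card with h | h
  · rw [hcast, h]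
    simp [Nat.even_iff, h]
  · rw [hcast, h]
    simp [Nat.even_iff, h]
    decide

/-- The width of the twist of the even-sets delta-matroid. -/
lemma width_twist {α : Type*} [Fintype α] [DecidableEq α] [Nonempty α] (A : Finset α) :
    widthF (twistF A (Finset.univ.powerset.filter (fun X : Finset α => Even X.card))) =
      if Even (Fintype.card α) then
        (if Even A.card then Fintype.card α else Fintype.card α - 2)
      else Fintype.card α - 1 := by
  classical
  set n := Fintype.card α with hn
  have hn1 : 1 ≤ n := Fintype.card_pos
  set F := Finset.univ.powerset.filter (fun X : Finset α => Even X.card) with hF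
  set S := (twistF A F).image Finset.card with hS
  have mem_S : ∀ Y : Finset α, Y.card % 2 = A.card % 2 → Y.card ∈ S := by
    intro Y hY
    have hX : symmDiff A (symmDiff A Y) = Y := symmDiff_symmDiff_cancel_left A Y
    have hpar := card_symmDiff_parity A Y
    have hev : Even (symmDiff A Y).card := by rw [Nat.even_iff]; omega
    have hmem : symmDiff A Y ∈ F := by
      simp [hF, hev]
    refine Finset.mem_image.2 ⟨symmDiff A (symmDiff A Y), Finset.mem_image.2 ⟨_, hmem, rfl⟩, ?_⟩
    rw [hX]
  have bound_S : ∀ m ∈ S, m ≤ n ∧ m % 2 = A.card % 2 := by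
    intro m hm
    obtain ⟨Z, hZ, rfl⟩ := Finset.mem_image.1 hm
    obtain ⟨X, hX, rfl⟩ := Finset.mem_image.1 hZ
    have hXe : Even X.card := (Finset.mem_filter.1 hX).2
    have hpar := card_symmDiff_parity A X
    have hle : (symmDiff A X).card ≤ n := Finset.card_le_univ _
    rw [Nat.even_iff] at hXe
    exact ⟨hle, by omega⟩
  set mlo := A.card % 2 with hmlo
  set mhi := n - (n + A.card) % 2 with hmhi
  have hmloS : mlo ∈ S := by
    rcases Nat.mod_two_eq_zero_or_one A.card with h | h
    · have := mem_S ∅ (by simp [hmlo, h])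
      simp only [Finset.card_empty] at this
      rw [hmlo, h]
      exact this
    · obtain ⟨x⟩ := ‹Nonempty α›
      have := mem_S {x} (by simp [hmlo, h])
      simp only [Finset.card_singleton] at this
      rw [hmlo, h]
      exact this
  have hmhiS : mhi ∈ S := by
    rcases Nat.mod_two_eq_zero_or_one (n + A.card) with h | h
    · have hc : (Finset.univ : Finset α).card = n := Finset.card_univ
      have := mem_S Finset.univ (by rw [hc]; omega)
      rw [hc] at this
      have hv : mhi = n := by omega
      rwa [hv]
    · obtain ⟨x⟩ := ‹Nonempty α›
      have hc : (Finset.univ.erase x).card = n - 1 := by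
        rw [Finset.card_erase_of_mem (Finset.mem_univ x), Finset.card_univ]
      have := mem_S (Finset.univ.erase x) (by rw [hc]; omega)
      rw [hc] at this
      have hv : mhi = n - 1 := by omega
      rwa [hv]
  have hSne : S.Nonempty := ⟨mlo, hmloS⟩
  have hmax : S.max' hSne = mhi :=
    le_antisymm
      (Finset.max'_le _ _ _ (fun m hm => by have := bound_S m hm; omega))
      (Finset.le_max' _ _ hmhiS)
  have hmin : S.min' hSne = mlo :=
    le_antisymm (Finset.min'_le _ _ hmloS)
      (Finset.le_min' _ _ _ (fun m hm => by have := bound_S m hm; omega))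
  have hw : widthF (twistF A F) = mhi - mlo := by
    unfold widthF
    rw [← hS, ← Finset.coe_max' hSne, ← Finset.coe_min' hSne, hmax, hmin]
    rfl
  rw [hw]
  rcases Nat.even_or_odd n with he | ho
  · rw [if_pos he]
    rw [Nat.even_iff] at he
    rcases Nat.even_or_odd A.card with ha | hoa
    · rw [if_pos ha]; rw [Nat.even_iff] at ha; omega
    · rw [if_neg (Nat.not_even_iff_odd.2 hoa)]
      rw [Nat.odd_iff] at hoa; omega
  · rw [if_neg (Nat.not_even_iff_odd.2 ho)]
    rw [Nat.odd_iff] at ho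
    rcases Nat.even_or_odd A.card with ha | hoa
    · rw [Nat.even_iff] at ha; omega
    · rw [Nat.odd_iff] at hoa; omega

/-- In a nonempty finite type, exactly half the subsets have even cardinality. -/
lemma count_even_odd {α : Type*} [Fintype α] [DecidableEq α] [Nonempty α] :
    ((Finset.univ.powerset.filter (fun A : Finset α => Even A.card)).card
      = 2 ^ (Fintype.card α - 1)) ∧
    ((Finset.univ.powerset.filter (fun A : Finset α => ¬ Even A.card)).card
      = 2 ^ (Fintype.card α - 1)) := by
  classical
  set n := Fintype.card α with hn
  have hn1 : 1 ≤ n := Fintype.card_pos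
  set e := (Finset.univ.powerset.filter (fun A : Finset α => Even A.card)).card with he
  set o := (Finset.univ.powerset.filter (fun A : Finset α => ¬ Even A.card)).card with ho
  have hsum : e + o = 2 ^ n := by
    rw [he, ho, Finset.card_filter_add_card_filter_not,
      Finset.card_powerset, Finset.card_univ]
  have hzero : (0 : ℤ) = (e : ℤ) - o := by
    have h0 := Finset.sum_powerset_neg_one_pow_card_of_nonempty
      (Finset.univ_nonempty (α := α))
    rw [← Finset.sum_filter_add_sum_filter_not _ (fun A : Finset α => Even A.card)] at h0
    have h1 : ∑ m ∈ Finset.univ.powerset.filter (fun A : Finset α => Even A.card),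
        (-1 : ℤ) ^ m.card = e := by
      rw [Finset.sum_congr rfl (fun m hm => (Finset.mem_filter.1 hm).2.neg_one_pow)]
      simp [he]
    have h2 : ∑ m ∈ Finset.univ.powerset.filter (fun A : Finset α => ¬ Even A.card),
        (-1 : ℤ) ^ m.card = -o := by
      rw [Finset.sum_congr rfl (fun m hm =>
        (Nat.not_even_iff_odd.1 (Finset.mem_filter.1 hm).2).neg_one_pow)]
      simp [ho]
    rw [h1, h2] at h0
    omega
  have heo : e = o := by omega
  have hpow : 2 ^ n = 2 * 2 ^ (n - 1) := by
    rw [← pow_succ']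
    congr 1
    omega
  constructor <;> omega

/-- The twist polynomial of a normal binary delta-matroid whose intersection graph is
the complete graph on v vertices. -/
theorem twistPoly_complete {α : Type*} [Fintype α] [DecidableEq α] [Nonempty α]
    (C : Matrix α α (ZMod 2))
    (hC : ∀ u v, C u v = if u = v then 0 else 1) :
    (Odd (Fintype.card α) →
      twistPoly (Finset.univ : Finset α) (feas C)
        = (2 : Polynomial ℤ) ^ Fintype.card α * Polynomial.X ^ (Fintype.card α - 1)) ∧
    (Even (Fintype.card α) →
      twistPoly (Finset.univ : Finset α) (feas C)
        = (2 : Polynomial ℤ) ^ (Fintype.card α - 1) * Polynomial.X ^ Fintype.card α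
          + (2 : Polynomial ℤ) ^ (Fintype.card α - 1)
            * Polynomial.X ^ (Fintype.card α - 2)) := by
  classical
  have hfeas := feas_eq C hC
  set n := Fintype.card α with hn
  have hw : ∀ A ∈ (Finset.univ : Finset α).powerset,
      widthF (twistF A (feas C))
        = if Even n then (if Even A.card then n else n - 2) else n - 1 := by
    intro A _
    rw [hfeas]
    exact width_twist A
  constructor
  · intro hodd
    have hne : ¬ Even n := Nat.not_even_iff_odd.2 hodd
    unfold twistPoly
    rw [Finset.sum_congr rfl (fun A hA => by rw [hw A hA, if_neg hne])]
    rw [Finset.sum_const, Finset.card_powerset, Finset.card_univ, ← hn]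
    rw [nsmul_eq_mul]
    push_cast
    ring
  · intro heven
    unfold twistPoly
    rw [Finset.sum_congr rfl (fun A hA => by
      rw [hw A hA, if_pos heven, pow_ite])]
    rw [Finset.sum_ite, Finset.sum_const, Finset.sum_const]
    rw [(count_even_odd (α := α)).1, (count_even_odd (α := α)).2]
    rw [nsmul_eq_mul, nsmul_eq_mul]
    push_cast
    ring
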